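/- Suppose an m×n matrix A over a field factors as A = L̄ · R · Ū where L̄ is an invertible lower triangular m×m matrix and Ū is an invertible upper triangular n×n matrix. Then for all k ≤ m and t ≤ n, the row rank profile of the leading k×t submatrix of A equals the row rank profile of the leading k×t submatrix of R. -/

import Mathlib

open Matrix Submodule

noncomputable section
variable (F : Type*) [Field F] {V : Type*} [AddCommGroup V] [Module F V] {k : ℕ}

/-- span of the rows before `i` -/
def spanLT (v : Fin k → V) (i : Fin k) : Submodule F V := Submodule.span F (v '' {j | j < i})

/-- row `i` adds something new -/
def NewRow (v : Fin k → V) (i : Fin k) : Prop := v i ∉ spanLT F v i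

/-- the greedy (lexicographically smallest) independent list of rows -/
def greedy (v : Fin k → V) : List (Fin k) :=
  (List.finRange k).filter (fun i => @decide (NewRow F v i) (Classical.propDecidable _))

theorem mem_greedy {v : Fin k → V} {i : Fin k} : i ∈ greedy F v ↔ NewRow F v i := by
  simp [greedy, List.mem_filter, decide_eq_true_iff]

theorem greedy_sorted (v : Fin k → V) : (greedy F v).Pairwise (· < ·) :=
  (List.pairwise_lt_finRange k).sublist List.filter_sublist

theorem greedy_nodup (v : Fin k → V) : (greedy F v).Nodup :=
  (greedy_sorted F v).nodup

theorem span_newRow_inter (v : Fin k → V) (N : ℕ) :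
    Submodule.span F (v '' {j | NewRow F v j ∧ j.val < N}) =
      Submodule.span F (v '' {j | j.val < N}) := by
  induction N with
  | zero => simp
  | succ N IH =>
    by_cases hN : N < k
    · set i : Fin k := ⟨N, hN⟩ with hi
      have hji : ∀ j : Fin k, j = i ↔ (j : ℕ) = N := fun j =>
        ⟨fun h => by rw [h], fun h => Fin.val_injective h⟩
      have hset : {j : Fin k | j.val < N + 1} = insert i {j | j.val < N} := by
        ext j
        simp only [Set.mem_setOf_eq, Set.mem_insert_iff, hji]
        omega
      by_cases hnew : NewRow F v i
      · have hset2 : {j : Fin k | NewRow F v j ∧ j.val < N + 1} =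
            insert i {j | NewRow F v j ∧ j.val < N} := by
          ext j
          simp only [Set.mem_setOf_eq, Set.mem_insert_iff, hji]
          constructor
          · rintro ⟨h1, h2⟩
            rcases Nat.lt_succ_iff_lt_or_eq.mp h2 with h | h
            · exact Or.inr ⟨h1, h⟩
            · exact Or.inl h
          · rintro (h | ⟨h1, h2⟩)
            · refine ⟨?_, by omega⟩
              rwa [(hji j).mpr h]
            · exact ⟨h1, Nat.lt_succ_of_lt h2⟩
        rw [hset, hset2, Set.image_insert_eq, Set.image_insert_eq, span_insert, span_insert, IH]
      · have hmem : v i ∈ Submodule.span F (v '' {j | j.val < N}) := by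
          have he : {j : Fin k | j < i} = {j | j.val < N} := by
            ext j; exact Iff.rfl
          have := not_not.mp (fun h : v i ∉ spanLT F v i => hnew h)
          rwa [spanLT, he] at this
        have hset2 : {j : Fin k | NewRow F v j ∧ j.val < N + 1} =
            {j | NewRow F v j ∧ j.val < N} := by
          ext j
          simp only [Set.mem_setOf_eq]
          refine ⟨fun ⟨h1, h2⟩ => ⟨h1, ?_⟩, fun ⟨h1, h2⟩ => ⟨h1, Nat.lt_succ_of_lt h2⟩⟩
          rcases Nat.lt_succ_iff_lt_or_eq.mp h2 with h | h
          · exact h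
          · exact absurd h1 (by rwa [(hji j).mpr h])
        rw [hset, hset2, Set.image_insert_eq, span_insert_eq_span hmem, IH]
    · have hset : {j : Fin k | j.val < N + 1} = {j | j.val < N} := by
        ext j; have := j.isLt; simp only [Set.mem_setOf_eq]; omega
      have hset2 : {j : Fin k | NewRow F v j ∧ j.val < N + 1} =
          {j | NewRow F v j ∧ j.val < N} := by
        ext j; have := j.isLt
        simp only [Set.mem_setOf_eq]
        exact ⟨fun ⟨h1, _⟩ => ⟨h1, by omega⟩, fun ⟨h1, h2⟩ => ⟨h1, by omega⟩⟩
      rw [hset, hset2, IH]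

theorem spanLT_eq_span_newRow (v : Fin k → V) (i : Fin k) :
    spanLT F v i = Submodule.span F (v '' {j | NewRow F v j ∧ j < i}) := by
  have he : {j : Fin k | j < i} = {j | j.val < i.val} := by
    ext j; simp only [Set.mem_setOf_eq, Fin.lt_def]
  have he2 : {j : Fin k | NewRow F v j ∧ j < i} = {j | NewRow F v j ∧ j.val < i.val} := by
    ext j; simp only [Set.mem_setOf_eq, Fin.lt_def]
  rw [spanLT, he, he2, span_newRow_inter]

theorem span_newRow (v : Fin k → V) :
    Submodule.span F (v '' {j | NewRow F v j}) = Submodule.span F (Set.range v) := by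
  have h1 : {j : Fin k | NewRow F v j} = {j | NewRow F v j ∧ j.val < k} := by
    ext j; simp only [Set.mem_setOf_eq]; exact ⟨fun h => ⟨h, j.isLt⟩, fun h => h.1⟩
  have h2 : {j : Fin k | j.val < k} = Set.univ := by
    ext j; simp only [Set.mem_setOf_eq, Set.mem_univ, iff_true]; exact j.isLt
  rw [h1, span_newRow_inter, h2, Set.image_univ]

theorem linearIndependent_newRow (v : Fin k → V) :
    LinearIndependent F (fun x : {j : Fin k | NewRow F v j} => v x) := by
  classical
  suffices H : ∀ N : ℕ, LinearIndependent F
      (fun x : {j : Fin k | NewRow F v j ∧ j.val < N} => v x) by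
    have hset : {j : Fin k | NewRow F v j} = {j | NewRow F v j ∧ j.val < k} := by
      ext j; simp only [Set.mem_setOf_eq]; exact ⟨fun h => ⟨h, j.isLt⟩, fun h => h.1⟩
    rw [hset]; exact H k
  intro N
  induction N with
  | zero =>
    have hset : {j : Fin k | NewRow F v j ∧ j.val < 0} = (∅ : Set (Fin k)) := by
      ext j; simp
    rw [hset]
    exact linearIndependent_empty_type
  | succ N IH =>
    by_cases hN : N < k
    · set i : Fin k := ⟨N, hN⟩ with hi
      have hji : ∀ j : Fin k, j = i ↔ (j : ℕ) = N := fun j =>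
        ⟨fun h => by rw [h], fun h => Fin.val_injective h⟩
      by_cases hnew : NewRow F v i
      · have hset2 : {j : Fin k | NewRow F v j ∧ j.val < N + 1} =
            insert i {j | NewRow F v j ∧ j.val < N} := by
          ext j
          simp only [Set.mem_setOf_eq, Set.mem_insert_iff, hji]
          constructor
          · rintro ⟨h1, h2⟩
            rcases Nat.lt_succ_iff_lt_or_eq.mp h2 with h | h
            · exact Or.inr ⟨h1, h⟩
            · exact Or.inl h
          · rintro (h | ⟨h1, h2⟩)
            · refine ⟨?_, by omega⟩
              rwa [(hji j).mpr h]
            · exact ⟨h1, Nat.lt_succ_of_lt h2⟩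
        have hnotmem : i ∉ {j : Fin k | NewRow F v j ∧ j.val < N} := by
          rintro ⟨-, h⟩
          simp [hi] at h
        rw [hset2]
        refine (linearIndepOn_insert hnotmem).mpr ⟨IH, fun hc => hnew ?_⟩
        refine Submodule.span_mono (Set.image_mono ?_) hc
        rintro j ⟨-, hj⟩
        simpa [Set.mem_setOf_eq, Fin.lt_def, hi] using hj
      · have hset2 : {j : Fin k | NewRow F v j ∧ j.val < N + 1} =
            {j | NewRow F v j ∧ j.val < N} := by
          ext j
          simp only [Set.mem_setOf_eq]
          refine ⟨fun ⟨h1, h2⟩ => ⟨h1, ?_⟩, fun ⟨h1, h2⟩ => ⟨h1, Nat.lt_succ_of_lt h2⟩⟩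
          rcases Nat.lt_succ_iff_lt_or_eq.mp h2 with h | h
          · exact h
          · exact absurd h1 (by rwa [(hji j).mpr h])
        rw [hset2]; exact IH
    · have hset2 : {j : Fin k | NewRow F v j ∧ j.val < N + 1} =
          {j | NewRow F v j ∧ j.val < N} := by
        ext j; have := j.isLt
        simp only [Set.mem_setOf_eq]
        exact ⟨fun ⟨h1, _⟩ => ⟨h1, by omega⟩, fun ⟨h1, h2⟩ => ⟨h1, by omega⟩⟩
      rw [hset2]; exact IH

theorem setOf_mem_greedy (v : Fin k → V) :
    {j : Fin k | j ∈ greedy F v} = {j | NewRow F v j} := by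
  ext j; simp [mem_greedy]

theorem length_greedy (v : Fin k → V) :
    (greedy F v).length = Module.finrank F (Submodule.span F (Set.range v)) := by
  classical
  rw [← span_newRow]
  have hind := linearIndependent_newRow F v
  have h1 := linearIndependent_iff_card_eq_finrank_span.mp hind
  rw [Set.finrank] at h1
  have h2 : Set.range (fun x : {j : Fin k | NewRow F v j} => v x) =
      v '' {j | NewRow F v j} := (Set.image_eq_range v _).symm
  rw [h2] at h1
  rw [← h1]
  have h3 : {j : Fin k | NewRow F v j} = ↑(greedy F v).toFinset := by
    rw [← setOf_mem_greedy]; ext j; simp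
  rw [← Nat.card_eq_fintype_card, h3, Nat.card_coe_set_eq, Set.ncard_coe_finset,
    List.toFinset_card_of_nodup (greedy_nodup F v)]

theorem lex_decomp {α : Type*} [LT α] : ∀ {b a : List α}, List.Lex (· < ·) b a →
    b.length = a.length →
    ∃ (p : List α) (y x : α) (b' a' : List α),
      b = p ++ y :: b' ∧ a = p ++ x :: a' ∧ y < x := by
  intro b a h
  induction h with
  | nil => intro hl; simp at hl
  | @cons z l1 l2 h ih =>
    intro hl
    obtain ⟨p, y, x, b', a', h1, h2, h3⟩ := ih (by simpa using hl)
    exact ⟨z :: p, y, x, b', a', by simp [h1], by simp [h2], h3⟩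
  | @rel y l1 x l2 h =>
    intro _
    exact ⟨[], y, x, l1, l2, rfl, rfl, h⟩

theorem lex_trichotomy {α : Type*} [LinearOrder α] : ∀ (a b : List α),
    a = b ∨ List.Lex (· < ·) a b ∨ List.Lex (· < ·) b a := by
  intro a
  induction a with
  | nil =>
    intro b
    cases b with
    | nil => exact Or.inl rfl
    | cons y ys => exact Or.inr (Or.inl List.Lex.nil)
  | cons x xs ih =>
    intro b
    cases b with
    | nil => exact Or.inr (Or.inr List.Lex.nil)
    | cons y ys =>
      rcases lt_trichotomy x y with h | rfl | h
      · exact Or.inr (Or.inl (List.Lex.rel h))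
      · rcases ih ys with rfl | h | h
        · exact Or.inl rfl
        · exact Or.inr (Or.inl (List.Lex.cons h))
        · exact Or.inr (Or.inr (List.Lex.cons h))
      · exact Or.inr (Or.inr (List.Lex.rel h))

theorem indep_mono_index {v : Fin k → V} {s t : Set (Fin k)} (hst : s ⊆ t)
    (h : LinearIndependent F (fun x : t => v x)) :
    LinearIndependent F (fun x : s => v x) :=
  h.comp (Set.inclusion hst) (Set.inclusion_injective hst)

theorem not_lex_lt_greedy (v : Fin k → V) (b : List (Fin k)) (hbs : b.Pairwise (· < ·))
    (hlen : b.length = (greedy F v).length)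
    (hind : LinearIndependent F (fun x : {x : Fin k // x ∈ b} => v x.val)) :
    ¬ List.Lex (· < ·) b (greedy F v) := by
  intro hlex
  obtain ⟨p, y, x, b', a', hb, ha, hyx⟩ := lex_decomp hlex hlen
  have hbs' := hbs; rw [hb] at hbs'
  have hgs := greedy_sorted F v; rw [ha] at hgs
  obtain ⟨-, -, hbp⟩ := List.pairwise_append.mp hbs'
  obtain ⟨-, hxa', hgp⟩ := List.pairwise_append.mp hgs
  have hp_lt_y : ∀ z ∈ p, z < y := fun z hz => hbp z hz y (List.mem_cons_self)
  have hx_lt_a' : ∀ z ∈ a', x < z := fun z hz => (List.pairwise_cons.mp hxa').1 z hz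
  have hynotg : y ∉ greedy F v := by
    rw [ha]
    intro hy
    rcases List.mem_append.mp hy with hy | hy
    · exact lt_irrefl y (hp_lt_y y hy)
    · rcases List.mem_cons.mp hy with rfl | hy
      · exact lt_irrefl y hyx
      · exact absurd (hyx.trans (hx_lt_a' y hy)) (lt_irrefl y)
  have hnnew : ¬ NewRow F v y := fun h => hynotg ((mem_greedy F).mpr h)
  have h0 : v y ∈ spanLT F v y := not_not.mp hnnew
  rw [spanLT_eq_span_newRow] at h0
  have hsets : {j : Fin k | NewRow F v j ∧ j < y} = {z | z ∈ p} := by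
    ext j
    simp only [Set.mem_setOf_eq]
    constructor
    · rintro ⟨hnj, hjy⟩
      have : j ∈ greedy F v := (mem_greedy F).mpr hnj
      rw [ha] at this
      rcases List.mem_append.mp this with hj | hj
      · exact hj
      · rcases List.mem_cons.mp hj with rfl | hj
        · exact absurd (hjy.trans hyx) (lt_irrefl j)
        · exact absurd ((hjy.trans hyx).trans (hx_lt_a' j hj)) (lt_irrefl j)
    · intro hj
      refine ⟨(mem_greedy F).mp ?_, hp_lt_y j hj⟩
      rw [ha]
      exact List.mem_append.mpr (Or.inl hj)
  rw [hsets] at h0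
  have hsub : insert y {z : Fin k | z ∈ p} ⊆ {z | z ∈ b} := by
    rintro z (rfl | hz)
    · rw [hb]; exact List.mem_append.mpr (Or.inr (List.mem_cons_self))
    · rw [hb]; exact List.mem_append.mpr (Or.inl hz)
  have hynp : y ∉ {z : Fin k | z ∈ p} := fun hy => lt_irrefl y (hp_lt_y y hy)
  have hi2 : LinearIndependent F (fun z : (insert y {z : Fin k | z ∈ p} : Set (Fin k)) => v z) :=
    indep_mono_index F hsub hind
  exact ((linearIndepOn_insert hynp).mp hi2).2 h0


theorem profile_char (v : Fin k → V) (l : List (Fin k)) :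
    (l.Pairwise (· < ·) ∧ l.length = Module.finrank F (Submodule.span F (Set.range v)) ∧
      LinearIndependent F (fun i : {x : Fin k // x ∈ l} => v i.val) ∧
      ∀ l' : List (Fin k), l'.Pairwise (· < ·) →
        l'.length = Module.finrank F (Submodule.span F (Set.range v)) →
        LinearIndependent F (fun i : {x : Fin k // x ∈ l'} => v i.val) →
        l = l' ∨ List.Lex (· < ·) l l') ↔ l = greedy F v := by
  have hgind : LinearIndependent F (fun i : {x : Fin k // x ∈ greedy F v} => v i.val) := by
    have := linearIndependent_newRow F v
    rw [← setOf_mem_greedy] at this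
    exact this
  constructor
  · rintro ⟨hs, hlen, hind, hmin⟩
    rcases hmin (greedy F v) (greedy_sorted F v) (length_greedy F v) hgind with h | h
    · exact h
    · exact absurd h (not_lex_lt_greedy F v l hs (by rw [hlen, length_greedy]) hind)
  · rintro rfl
    refine ⟨greedy_sorted F v, length_greedy F v, hgind, fun l' hs' hlen' hind' => ?_⟩
    rcases lex_trichotomy (greedy F v) l' with h | h | h
    · exact Or.inl h
    · exact Or.inr h
    · exact absurd h (not_lex_lt_greedy F v l' hs' (by rw [hlen', length_greedy]) hind')



theorem spanLT_mono (v : Fin k → V) {i j : Fin k} (hij : i ≤ j) :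
    spanLT F v i ≤ spanLT F v j :=
  Submodule.span_mono (Set.image_mono (fun a (ha : a < i) => lt_of_lt_of_le ha hij))

theorem newRow_smul_iff (v w : Fin k → V) (c : Fin k → F) (hc : ∀ i, c i ≠ 0)
    (h : ∀ i, w i - c i • v i ∈ spanLT F v i) :
    ∀ i, spanLT F w i = spanLT F v i ∧ (NewRow F w i ↔ NewRow F v i) := by
  have H : ∀ N : ℕ, ∀ i : Fin k, i.val < N →
      spanLT F w i = spanLT F v i ∧ (NewRow F w i ↔ NewRow F v i) := by
    intro N
    induction N with
    | zero => intro i hi; omega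
    | succ N IH =>
      intro i hiN
      have IH' : ∀ j : Fin k, j < i → spanLT F w j = spanLT F v j := by
        intro j hj
        exact (IH j (by have := Fin.lt_def.mp hj; omega)).1
      have hspan : spanLT F w i = spanLT F v i := by
        apply le_antisymm
        · rw [spanLT]
          apply Submodule.span_le.mpr
          rintro _ ⟨j, (hj : j < i), rfl⟩
          have h1 : w j - c j • v j ∈ spanLT F v i :=
            spanLT_mono F v hj.le (h j)
          have h2 : v j ∈ spanLT F v i :=
            Submodule.subset_span ⟨j, hj, rfl⟩
          have := Submodule.add_mem _ h1 (Submodule.smul_mem _ (c j) h2)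
          rwa [sub_add_cancel] at this
        · show Submodule.span F (v '' {j | j < i}) ≤ spanLT F w i
          apply Submodule.span_le.mpr
          rintro _ ⟨j, (hj : j < i), rfl⟩
          have hd : w j - c j • v j ∈ spanLT F w i := by
            have hj2 := h j
            rw [← IH' j hj] at hj2
            exact spanLT_mono F w hj.le hj2
          have hw : w j ∈ spanLT F w i := Submodule.subset_span ⟨j, hj, rfl⟩
          have : c j • v j ∈ spanLT F w i := by
            have := Submodule.sub_mem _ hw hd
            rwa [sub_sub_cancel] at this
          exact (Submodule.smul_mem_iff _ (hc j)).mp this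
      refine ⟨hspan, ?_⟩
      unfold NewRow
      rw [hspan]
      have hmem : w i ∈ spanLT F v i ↔ v i ∈ spanLT F v i := by
        constructor
        · intro hw
          have := Submodule.sub_mem _ hw (h i)
          rw [sub_sub_cancel] at this
          exact (Submodule.smul_mem_iff _ (hc i)).mp this
        · intro hv
          have := Submodule.add_mem _ (h i) (Submodule.smul_mem _ (c i) hv)
          rwa [sub_add_cancel] at this
      exact not_congr hmem
  exact fun i => H (i.val + 1) i (Nat.lt_succ_self _)

theorem newRow_equiv {V' : Type*} [AddCommGroup V'] [Module F V'] (e : V ≃ₗ[F] V')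
    (v : Fin k → V) (i : Fin k) :
    NewRow F (fun j => e (v j)) i ↔ NewRow F v i := by
  unfold NewRow spanLT
  have him : (fun j => e (v j)) '' {j | j < i} = ⇑e '' (v '' {j | j < i}) := by
    rw [Set.image_image]
  rw [him, not_iff_not]
  exact Submodule.apply_mem_span_image_iff_mem_span (f := e.toLinearMap) e.injective

end

section MatrixPart

variable {F : Type*} [Field F]

theorem diag_ne_zero_lower {m : ℕ} (L : Matrix (Fin m) (Fin m) F)
    (htri : ∀ i j : Fin m, i < j → L i j = 0) (hL : IsUnit L) (i : Fin m) : L i i ≠ 0 := by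
  have hbt : L.BlockTriangular OrderDual.toDual := fun i j h => htri i j h
  have hdet : L.det = ∏ i, L i i := Matrix.det_of_lowerTriangular L hbt
  have hu : IsUnit L.det := (Matrix.isUnit_iff_isUnit_det L).mp hL
  rw [hdet] at hu
  exact Finset.prod_ne_zero_iff.mp hu.ne_zero i (Finset.mem_univ i)

theorem diag_ne_zero_upper {n : ℕ} (U : Matrix (Fin n) (Fin n) F)
    (htri : ∀ i j : Fin n, j < i → U i j = 0) (hU : IsUnit U) (i : Fin n) : U i i ≠ 0 := by
  have hbt : U.BlockTriangular id := fun i j h => htri i j h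
  have hdet : U.det = ∏ i, U i i := Matrix.det_of_upperTriangular hbt
  have hu : IsUnit U.det := (Matrix.isUnit_iff_isUnit_det U).mp hU
  rw [hdet] at hu
  exact Finset.prod_ne_zero_iff.mp hu.ne_zero i (Finset.mem_univ i)

theorem submatrix_mul_tri_left {m n k t : ℕ} (hk : k ≤ m) (ht : t ≤ n)
    (L : Matrix (Fin m) (Fin m) F) (htri : ∀ i j : Fin m, i < j → L i j = 0)
    (M : Matrix (Fin m) (Fin n) F) :
    (L * M).submatrix (Fin.castLE hk) (Fin.castLE ht) =
      L.submatrix (Fin.castLE hk) (Fin.castLE hk) * M.submatrix (Fin.castLE hk) (Fin.castLE ht) := by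
  ext i j
  simp only [Matrix.submatrix_apply, Matrix.mul_apply]
  have h1 : ∑ p ∈ Finset.univ.map (Fin.castLEEmb hk),
      L (Fin.castLE hk i) p * M p (Fin.castLE ht j) =
      ∑ p : Fin k, L (Fin.castLE hk i) (Fin.castLE hk p) * M (Fin.castLE hk p) (Fin.castLE ht j) :=
    Finset.sum_map _ _ _
  rw [← h1]
  refine (Finset.sum_subset (Finset.subset_univ _) ?_).symm
  intro p _ hp
  have hpk : k ≤ (p : ℕ) := by
    by_contra hlt
    push_neg at hlt
    exact hp (Finset.mem_map.mpr ⟨⟨(p : ℕ), hlt⟩, Finset.mem_univ _, Fin.ext rfl⟩)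
  apply mul_eq_zero_of_left
  apply htri
  rw [Fin.lt_def]
  exact lt_of_lt_of_le (i.isLt) hpk

theorem submatrix_mul_tri_right {m n k t : ℕ} (hk : k ≤ m) (ht : t ≤ n)
    (U : Matrix (Fin n) (Fin n) F) (htri : ∀ i j : Fin n, j < i → U i j = 0)
    (M : Matrix (Fin m) (Fin n) F) :
    (M * U).submatrix (Fin.castLE hk) (Fin.castLE ht) =
      M.submatrix (Fin.castLE hk) (Fin.castLE ht) * U.submatrix (Fin.castLE ht) (Fin.castLE ht) := by
  ext i j
  simp only [Matrix.submatrix_apply, Matrix.mul_apply]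
  have h1 : ∑ q ∈ Finset.univ.map (Fin.castLEEmb ht),
      M (Fin.castLE hk i) q * U q (Fin.castLE ht j) =
      ∑ q : Fin t, M (Fin.castLE hk i) (Fin.castLE ht q) * U (Fin.castLE ht q) (Fin.castLE ht j) :=
    Finset.sum_map _ _ _
  rw [← h1]
  refine (Finset.sum_subset (Finset.subset_univ _) ?_).symm
  intro q _ hq
  have hqt : t ≤ (q : ℕ) := by
    by_contra hlt
    push_neg at hlt
    exact hq (Finset.mem_map.mpr ⟨⟨(q : ℕ), hlt⟩, Finset.mem_univ _, Fin.ext rfl⟩)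
  apply mul_eq_zero_of_right
  apply htri
  rw [Fin.lt_def]
  exact lt_of_lt_of_le (j.isLt) hqt

theorem newRow_mul_right {k t : ℕ} (B : Matrix (Fin k) (Fin t) F)
    (U' : Matrix (Fin t) (Fin t) F) (hU' : IsUnit U'.det) (i : Fin k) :
    NewRow F (fun j => (B * U') j) i ↔ NewRow F (fun j => B j) i := by
  let e : (Fin t → F) ≃ₗ[F] (Fin t → F) :=
    LinearEquiv.ofLinear U'.vecMulLinear (U'⁻¹).vecMulLinear
      (by
        apply LinearMap.ext; intro x
        simp [Matrix.vecMul_vecMul, Matrix.nonsing_inv_mul U' hU'])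
      (by
        apply LinearMap.ext; intro x
        simp [Matrix.vecMul_vecMul, Matrix.mul_nonsing_inv U' hU'])
  have hrow : (fun j => (B * U') j) = fun j => e (B j) := by
    funext j q
    show (B * U') j q = (B j ᵥ* U') q
    simp [Matrix.mul_apply, Matrix.vecMul, dotProduct]
  rw [hrow]
  exact newRow_equiv F e (fun j => B j) i

theorem newRow_mul_left {k t : ℕ} (C : Matrix (Fin k) (Fin t) F)
    (L' : Matrix (Fin k) (Fin k) F)
    (htri : ∀ i j : Fin k, i < j → L' i j = 0) (hdiag : ∀ i, L' i i ≠ 0) (i : Fin k) :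
    NewRow F (fun j => (L' * C) j) i ↔ NewRow F (fun j => C j) i := by
  refine (newRow_smul_iff F (fun j => C j) (fun j => (L' * C) j) (fun j => L' j j)
    hdiag ?_ i).2
  intro i0
  have hw : (L' * C) i0 = ∑ p, L' i0 p • C p := by
    funext q
    simp [Matrix.mul_apply, Finset.sum_apply]
  have hsplit : (L' * C) i0 - L' i0 i0 • C i0 = ∑ p ∈ Finset.univ.erase i0, L' i0 p • C p := by
    rw [hw, ← Finset.sum_erase_add Finset.univ _ (Finset.mem_univ i0)]
    exact add_sub_cancel_right _ _
  show (L' * C) i0 - L' i0 i0 • C i0 ∈ _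
  rw [hsplit]
  apply Submodule.sum_mem
  intro p hp
  have hpne : p ≠ i0 := Finset.ne_of_mem_erase hp
  rcases lt_or_gt_of_ne hpne with h | h
  · exact Submodule.smul_mem _ _ (Submodule.subset_span ⟨p, h, rfl⟩)
  · rw [htri i0 p h, zero_smul]
    exact Submodule.zero_mem _

end MatrixPart

/-- `l` is the row rank profile of `A`: the lexicographically smallest sorted list of
`rank A` row indices whose corresponding rows are linearly independent. -/
def IsRowRankProfile (F : Type*) [Field F] {m n : ℕ}
    (A : Matrix (Fin m) (Fin n) F) (l : List (Fin m)) : Prop :=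
  l.Pairwise (· < ·) ∧ l.length = A.rank ∧
  LinearIndependent F (fun i : {x : Fin m // x ∈ l} => A i.val) ∧
  ∀ l' : List (Fin m), l'.Pairwise (· < ·) → l'.length = A.rank →
    LinearIndependent F (fun i : {x : Fin m // x ∈ l'} => A i.val) →
    l = l' ∨ List.Lex (· < ·) l l'

theorem rowRankProfile_leading_submatrix_of_LRU (F : Type*) [Field F] {m n : ℕ}
    (A R : Matrix (Fin m) (Fin n) F)
    (L : Matrix (Fin m) (Fin m) F) (U : Matrix (Fin n) (Fin n) F)
    (hLtri : ∀ i j : Fin m, i < j → L i j = 0) (hL : IsUnit L)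
    (hUtri : ∀ i j : Fin n, j < i → U i j = 0) (hU : IsUnit U)
    (hA : A = L * R * U) :
    ∀ (k t : ℕ) (hk : k ≤ m) (ht : t ≤ n) (l : List (Fin k)),
      IsRowRankProfile F (A.submatrix (Fin.castLE hk) (Fin.castLE ht)) l ↔
      IsRowRankProfile F (R.submatrix (Fin.castLE hk) (Fin.castLE ht)) l := by
  intro k t hk ht l
  set A' : Matrix (Fin k) (Fin t) F := A.submatrix (Fin.castLE hk) (Fin.castLE ht) with hA'
  set B : Matrix (Fin k) (Fin t) F := R.submatrix (Fin.castLE hk) (Fin.castLE ht) with hB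
  set L' : Matrix (Fin k) (Fin k) F := L.submatrix (Fin.castLE hk) (Fin.castLE hk) with hL'
  set U' : Matrix (Fin t) (Fin t) F := U.submatrix (Fin.castLE ht) (Fin.castLE ht) with hU'
  have hL'tri : ∀ i j : Fin k, i < j → L' i j = 0 := fun i j h =>
    hLtri _ _ (by rw [Fin.lt_def] at h ⊢; exact h)
  have hU'tri : ∀ i j : Fin t, j < i → U' i j = 0 := fun i j h =>
    hUtri _ _ (by rw [Fin.lt_def] at h ⊢; exact h)
  have hL'diag : ∀ i, L' i i ≠ 0 := fun i => diag_ne_zero_lower L hLtri hL _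
  have hU'det : IsUnit U'.det := by
    have hbt : U'.BlockTriangular id := fun i j h => hU'tri i j h
    rw [Matrix.det_of_upperTriangular hbt]
    apply isUnit_iff_ne_zero.mpr
    apply Finset.prod_ne_zero_iff.mpr
    intro i _
    exact diag_ne_zero_upper U hUtri hU _
  have hfact : A' = L' * (B * U') := by
    rw [hA', hA, Matrix.mul_assoc, submatrix_mul_tri_left hk ht L hLtri (R * U),
      submatrix_mul_tri_right hk ht U hUtri R]
  have hNR : ∀ i, NewRow F (fun j => A' j) i ↔ NewRow F (fun j => B j) i := by
    intro i
    rw [show (fun j => A' j) = fun j => (L' * (B * U')) j by rw [hfact]]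
    exact (newRow_mul_left (B * U') L' hL'tri hL'diag i).trans
      (newRow_mul_right B U' hU'det i)
  have hgr : greedy F A' = greedy F B := by
    unfold greedy
    apply List.filter_congr
    intro x _
    exact decide_eq_decide.mpr (hNR x)
  unfold IsRowRankProfile
  rw [Matrix.rank_eq_finrank_span_row, Matrix.rank_eq_finrank_span_row]
  exact (profile_char F A'.row l).trans
    (by rw [show greedy F A'.row = greedy F B.row from hgr]; exact (profile_char F B.row l).symm)
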